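/- For any unit vector α ∈ ℝ³ and any θ ∈ ℝ with cos θ ≠ −1, the matrix E evaluated at the Rodrigues matrix admits the axis-angle representation E(R(α,θ)) = (1/√(2 + 2cos θ))·[(1 + cos θ)·I + (sin θ)·α^×]. -/

import Mathlib

open Matrix

noncomputable section

/-- The cross (hat) map: `x^×` with `x^× y = x × y`. -/
def cross3 (x : Fin 3 → ℝ) : Matrix (Fin 3) (Fin 3) ℝ :=
  !![0, -x 2, x 1; x 2, 0, -x 0; -x 1, x 0, 0]

/-- The vee map: `A∨ = (A₃₂, A₁₃, A₂₁)`. -/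
def vee3 (A : Matrix (Fin 3) (Fin 3) ℝ) : Fin 3 → ℝ :=
  ![A 2 1, A 0 2, A 1 0]

/-- The Rodrigues matrix `R(α,θ) = I + sin θ · α^× + (1-cos θ) · α^×α^×`. -/
def rod (α : Fin 3 → ℝ) (θ : ℝ) : Matrix (Fin 3) (Fin 3) ℝ :=
  1 + Real.sin θ • cross3 α + (1 - Real.cos θ) • (cross3 α * cross3 α)

/-- The error vector `ψ(R) = ½(R - Rᵀ)∨`. -/
def psi3 (R : Matrix (Fin 3) (Fin 3) ℝ) : Fin 3 → ℝ :=
  (1 / 2 : ℝ) • vee3 (R - Rᵀ)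

/-- The generalized error vector `e_R(R) = (1/√(1+tr R)) (R - Rᵀ)∨`. -/
def eR (R : Matrix (Fin 3) (Fin 3) ℝ) : Fin 3 → ℝ :=
  (1 / Real.sqrt (1 + R.trace)) • vee3 (R - Rᵀ)

/-- `E_c(R) = ½((tr R)·I - Rᵀ)`. -/
def Ec (R : Matrix (Fin 3) (Fin 3) ℝ) : Matrix (Fin 3) (Fin 3) ℝ :=
  (1 / 2 : ℝ) • (R.trace • (1 : Matrix (Fin 3) (Fin 3) ℝ) - Rᵀ)

/-- `E(R) = (1/√(1+tr R))(2E_c(R) + ½ e_R e_Rᵀ)`. -/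
def Emat (R : Matrix (Fin 3) (Fin 3) ℝ) : Matrix (Fin 3) (Fin 3) ℝ :=
  (1 / Real.sqrt (1 + R.trace)) •
    ((2 : ℝ) • Ec R + (1 / 2 : ℝ) • vecMulVec (eR R) (eR R))

set_option maxHeartbeats 1000000 in
/-- axis-angle representation of `E` at the Rodrigues matrix. -/
theorem Emat_rodrigues_axang (α : Fin 3 → ℝ)
    (hα : α 0 ^ 2 + α 1 ^ 2 + α 2 ^ 2 = 1) (θ : ℝ) (hθ : Real.cos θ ≠ -1) :
    Emat (rod α θ) =
      (1 / Real.sqrt (2 + 2 * Real.cos θ)) •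
        ((1 + Real.cos θ) • (1 : Matrix (Fin 3) (Fin 3) ℝ) + Real.sin θ • cross3 α) := by
  set s := Real.sin θ
  set c := Real.cos θ with hc
  have hrod : rod α θ =
      !![1 - (1-c)*(α 1^2 + α 2^2), -s*α 2 + (1-c)*α 0*α 1, s*α 1 + (1-c)*α 0*α 2;
         s*α 2 + (1-c)*α 0*α 1, 1 - (1-c)*(α 0^2 + α 2^2), -s*α 0 + (1-c)*α 1*α 2;
         -s*α 1 + (1-c)*α 0*α 2, s*α 0 + (1-c)*α 1*α 2, 1 - (1-c)*(α 0^2 + α 1^2)] := by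
    ext i j
    fin_cases i <;> fin_cases j <;>
      simp [rod, cross3, Matrix.mul_apply, Matrix.one_apply, Fin.sum_univ_succ] <;> ring
  have htr : (rod α θ).trace = 1 + 2 * c := by
    rw [hrod]
    simp [Matrix.trace, Fin.sum_univ_succ]
    linear_combination (2*(c - 1)) * hα
  have hpos : (0:ℝ) < 2 + 2 * c := by
    rcases lt_or_eq_of_le (Real.neg_one_le_cos θ) with h | h
    · rw [hc]; linarith
    · exact absurd h.symm hθ
  set q := Real.sqrt (2 + 2 * c) with hqdef
  have hq0 : q ≠ 0 := ne_of_gt (Real.sqrt_pos.mpr hpos)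
  have hq2 : q ^ 2 = 2 + 2 * c := Real.sq_sqrt hpos.le
  have hsin : s ^ 2 = 1 - c ^ 2 := Real.sin_sq θ
  have h1tr : 1 + (rod α θ).trace = 2 + 2 * c := by rw [htr]; ring
  have heR : eR (rod α θ) = fun i => 2 * s / q * α i := by
    simp only [eR, h1tr, ← hqdef]
    funext i
    simp only [vee3, Matrix.sub_apply, Matrix.transpose_apply]
    fin_cases i <;> simp [hrod] <;> ring
  have hv : vecMulVec (eR (rod α θ)) (eR (rod α θ)) =
      (2 * (1 - c)) • vecMulVec α α := by
    ext i j
    simp only [heR, vecMulVec_apply, Matrix.smul_apply, smul_eq_mul]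
    field_simp
    linear_combination ((c - 1) * α i * α j) * hq2 + (2 * α i * α j) * hsin
  rw [Emat, hv, h1tr, ← hqdef]
  congr 1
  ext i j
  simp only [Matrix.add_apply, Matrix.smul_apply, Ec, Matrix.sub_apply, Matrix.smul_apply,
    Matrix.transpose_apply, vecMulVec_apply, smul_eq_mul, htr]
  fin_cases i <;> fin_cases j <;>
    simp [hrod, cross3, Matrix.one_apply] <;>
    first
      | ring1
      | linear_combination (1 - c) * hα
      | linear_combination (c - 1) * hα
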